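/- Let 0 < p < 1 and 0 < q < 1, let (U^n,V^n) ~ DSBS(p)^⊗n on {0,1}^n × {0,1}^n, let f,g : {0,1}^n → {0,1}^n, and set X^n = f(U^n), Y^n = g(V^n). Let p_{XY} be DSBS(q). Then D(p_{X^nY^n} ‖ p_{XY}^{⊗n}) ≥ log₂((1−q)/q) · E[d_H(X^n,Y^n)] + n·( log₂((1−p)/(1−q)) − p·log₂((1−p)/p) ), with equality if and only if both f and g are bijections. In particular, for q = p, D(p_{X^nY^n} ‖ p_{XY}^{⊗n}) ≥ log₂((1−p)/p) · ( E[d_H(X^n,Y^n)] − np ). -/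

import Mathlib

open Finset

/-- KL divergence in bits (finite-alphabet sum form, convention `0 · log 0 = 0`). -/
noncomputable def klDiv {α : Type*} [Fintype α] (p q : α → ℝ) : ℝ :=
  ∑ a, p a * Real.logb 2 (p a / q a)

/-- The pmf of one DSBS(p) pair on `{0,1}` (encoded by `Bool`). -/
noncomputable def dsbsPair (p : ℝ) (uv : Bool × Bool) : ℝ :=
  if uv.1 = uv.2 then (1 - p) / 2 else p / 2

/-- Joint law of `(f(U^n), g(V^n))` when `(U^n,V^n) ~ DSBS(p)^{⊗n}`. -/
noncomputable def imageLaw (p : ℝ) (n : ℕ) (f g : (Fin n → Bool) → (Fin n → Bool))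
    (xy : (Fin n → Bool) × (Fin n → Bool)) : ℝ :=
  ∑ u : Fin n → Bool, ∑ v : Fin n → Bool,
    (∏ i, dsbsPair p (u i, v i)) * (if f u = xy.1 then (1:ℝ) else 0) *
      (if g v = xy.2 then (1:ℝ) else 0)

/-- Expected Hamming distance `E[d_H(f(U^n), g(V^n))]` under `DSBS(p)^{⊗n}`. -/
noncomputable def expDH (p : ℝ) (n : ℕ) (f g : (Fin n → Bool) → (Fin n → Bool)) : ℝ :=
  ∑ u : Fin n → Bool, ∑ v : Fin n → Bool,
    (∏ i, dsbsPair p (u i, v i)) * (hammingDist (f u) (g v) : ℝ)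

namespace Stmt9Aux

lemma sum_pi_prod {β : Type*} [Fintype β] (n : ℕ) (F : β → ℝ) :
    ∑ w : Fin n → β, ∏ i, F (w i) = (∑ b, F b) ^ n := by
  classical
  rw [← Fintype.piFinset_univ,
    ← Finset.prod_univ_sum (fun _ : Fin n => (univ : Finset β)) (fun _ b => F b)]
  simp

lemma sum_pi_prod_single {β : Type*} [Fintype β] (n : ℕ) (F G : β → ℝ)
    (hF : ∑ b, F b = 1) (j : Fin n) :
    ∑ w : Fin n → β, (∏ i, F (w i)) * G (w j) = ∑ b, F b * G b := by
  classical
  have h1 : ∀ w : Fin n → β,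
      (∏ i, F (w i)) * G (w j) = ∏ i, (F (w i) * if i = j then G (w i) else 1) := by
    intro w
    rw [Finset.prod_mul_distrib, Finset.prod_ite_eq' univ j (fun i => G (w i))]
    simp
  simp_rw [h1]
  rw [← Fintype.piFinset_univ,
    ← Finset.prod_univ_sum (fun _ : Fin n => (univ : Finset β))
      (fun i b => F b * if i = j then G b else 1)]
  have h2 : ∀ i : Fin n, (∑ b, (F b * if i = j then G b else 1))
      = if i = j then ∑ b, F b * G b else 1 := by
    intro i
    split_ifs with h
    · simp
    · simp [hF]
  calc ∏ i : Fin n, ∑ b, (F b * if i = j then G b else 1)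
      = ∏ i : Fin n, (if i = j then ∑ b, F b * G b else 1) :=
        Finset.prod_congr rfl fun i _ => h2 i
    _ = ∑ b, F b * G b := by
        rw [Finset.prod_ite_eq' univ j (fun _ => ∑ b, F b * G b)]; simp

lemma sum_pi_prod_mul {β : Type*} [Fintype β] (n : ℕ) (F G : β → ℝ)
    (hF : ∑ b, F b = 1) :
    ∑ w : Fin n → β, (∏ i, F (w i)) * ∑ j, G (w j) = n * ∑ b, F b * G b := by
  simp_rw [Finset.mul_sum]
  rw [Finset.sum_comm]
  rw [Finset.sum_congr rfl fun j _ => sum_pi_prod_single n F G hF j,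
    Finset.sum_const, card_univ, Fintype.card_fin, nsmul_eq_mul, Finset.mul_sum]

lemma sum_double {n : ℕ} (Φ : ((Fin n → Bool) × (Fin n → Bool)) → ℝ) :
    ∑ uv : (Fin n → Bool) × (Fin n → Bool), Φ uv
      = ∑ w : Fin n → Bool × Bool, Φ (fun i => (w i).1, fun i => (w i).2) :=
  (Fintype.sum_equiv (Equiv.arrowProdEquivProdArrow (Fin n) (fun _ => Bool) (fun _ => Bool))
    (fun w => Φ (fun i => (w i).1, fun i => (w i).2)) Φ (fun _ => rfl)).symm

lemma dsbs_pos {r : ℝ} (h0 : 0 < r) (h1 : r < 1) (ab : Bool × Bool) :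
    0 < dsbsPair r ab := by
  unfold dsbsPair; split_ifs <;> linarith

lemma dsbs_sum (r : ℝ) : ∑ ab : Bool × Bool, dsbsPair r ab = 1 := by
  simp [Fintype.sum_prod_type, dsbsPair]
  ring


noncomputable def mu (p : ℝ) (n : ℕ) (uv : (Fin n → Bool) × (Fin n → Bool)) : ℝ :=
  ∏ i, dsbsPair p (uv.1 i, uv.2 i)

lemma mu_pos {p : ℝ} (hp0 : 0 < p) (hp1 : p < 1) {n : ℕ}
    (uv : (Fin n → Bool) × (Fin n → Bool)) : 0 < mu p n uv :=
  Finset.prod_pos fun _ _ => dsbs_pos hp0 hp1 _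

lemma sum_mu (p : ℝ) (n : ℕ) :
    ∑ uv : (Fin n → Bool) × (Fin n → Bool), mu p n uv = 1 := by
  rw [sum_double (mu p n)]
  have : ∀ w : Fin n → Bool × Bool,
      mu p n (fun i => (w i).1, fun i => (w i).2) = ∏ i, dsbsPair p (w i) := by
    intro w; unfold mu; simp
  rw [Finset.sum_congr rfl fun w _ => this w, sum_pi_prod, dsbs_sum, one_pow]

lemma push (p : ℝ) (n : ℕ) (f g : (Fin n → Bool) → (Fin n → Bool))
    (φ : (Fin n → Bool) × (Fin n → Bool) → ℝ) :
    ∑ xy : (Fin n → Bool) × (Fin n → Bool), imageLaw p n f g xy * φ xy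
      = ∑ uv : (Fin n → Bool) × (Fin n → Bool), mu p n uv * φ (f uv.1, g uv.2) := by
  have key : ∀ xy : (Fin n → Bool) × (Fin n → Bool), imageLaw p n f g xy * φ xy
      = ∑ uv : (Fin n → Bool) × (Fin n → Bool), (mu p n uv * φ (f uv.1, g uv.2)) *
          ((if f uv.1 = xy.1 then (1:ℝ) else 0) * (if g uv.2 = xy.2 then 1 else 0)) := by
    intro xy
    rw [Fintype.sum_prod_type]
    unfold imageLaw
    rw [Finset.sum_mul]
    refine Finset.sum_congr rfl fun u _ => ?_
    rw [Finset.sum_mul]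
    refine Finset.sum_congr rfl fun v _ => ?_
    by_cases h1 : f u = xy.1 <;> by_cases h2 : g v = xy.2 <;>
      simp [h1, h2, mu] <;> ring
  rw [Finset.sum_congr rfl fun xy _ => key xy, Finset.sum_comm]
  refine Finset.sum_congr rfl fun uv _ => ?_
  rw [Fintype.sum_prod_type]
  simp [mul_ite, mul_one, mul_zero, Finset.sum_ite_eq]

lemma imageLaw_nonneg {p : ℝ} (hp0 : 0 < p) (hp1 : p < 1) {n : ℕ}
    (f g : (Fin n → Bool) → (Fin n → Bool)) (xy : (Fin n → Bool) × (Fin n → Bool)) :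
    0 ≤ imageLaw p n f g xy := by
  refine Finset.sum_nonneg fun u _ => Finset.sum_nonneg fun v _ => ?_
  have := (mu_pos hp0 hp1 (u, v)).le
  unfold mu at this
  positivity

lemma mu_le_imageLaw {p : ℝ} (hp0 : 0 < p) (hp1 : p < 1) {n : ℕ}
    (f g : (Fin n → Bool) → (Fin n → Bool)) (u v : Fin n → Bool) :
    mu p n (u, v) ≤ imageLaw p n f g (f u, g v) := by
  unfold imageLaw
  have hterm : ∀ u' v' : Fin n → Bool, 0 ≤ (∏ i, dsbsPair p (u' i, v' i)) *
      (if f u' = f u then (1:ℝ) else 0) * (if g v' = g v then 1 else 0) := by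
    intro u' v'
    have := (mu_pos hp0 hp1 (u', v')).le
    unfold mu at this
    positivity
  have h1 : mu p n (u, v) ≤ ∑ v' : Fin n → Bool, (∏ i, dsbsPair p (u i, v' i)) *
      (if f u = f u then (1:ℝ) else 0) * (if g v' = g v then 1 else 0) := by
    have := Finset.single_le_sum (f := fun v' => (∏ i, dsbsPair p (u i, v' i)) *
      (if f u = f u then (1:ℝ) else 0) * (if g v' = g v then 1 else 0))
      (fun v' _ => hterm u v') (Finset.mem_univ v)
    simpa [mu] using this
  refine h1.trans ?_
  exact Finset.single_le_sum (f := fun u' => ∑ v' : Fin n → Bool,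
      (∏ i, dsbsPair p (u' i, v' i)) * (if f u' = f u then (1:ℝ) else 0) *
        (if g v' = g v then 1 else 0))
    (fun u' _ => Finset.sum_nonneg fun v' _ => hterm u' v') (Finset.mem_univ u)


lemma logb_dsbs {q : ℝ} (hq0 : 0 < q) (hq1 : q < 1) (ab : Bool × Bool) :
    Real.logb 2 (dsbsPair q ab) = Real.logb 2 ((1 - q) / 2)
      - (if ab.1 = ab.2 then (0:ℝ) else 1) * Real.logb 2 ((1 - q) / q) := by
  have hq' : (0:ℝ) < 1 - q := by linarith
  unfold dsbsPair
  split_ifs with h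
  · ring
  · rw [one_mul, ← Real.logb_div (by positivity) (by positivity)]
    congr 1
    field_simp

lemma hamming_cast {n : ℕ} (x y : Fin n → Bool) :
    ∑ i, (if x i = y i then (0:ℝ) else 1) = (hammingDist x y : ℝ) := by
  have h : ∀ i, (if x i = y i then (0:ℝ) else 1) = if x i ≠ y i then 1 else 0 := by
    intro i; by_cases h : x i = y i <;> simp [h]
  rw [Finset.sum_congr rfl fun i _ => h i, Finset.sum_boole]
  rfl

lemma mu_logmu {p : ℝ} (hp0 : 0 < p) (hp1 : p < 1) (n : ℕ) :
    ∑ uv : (Fin n → Bool) × (Fin n → Bool), mu p n uv * Real.logb 2 (mu p n uv)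
      = n * ∑ ab : Bool × Bool, dsbsPair p ab * Real.logb 2 (dsbsPair p ab) := by
  rw [sum_double]
  have h1 : ∀ w : Fin n → Bool × Bool,
      mu p n (fun i => (w i).1, fun i => (w i).2)
        * Real.logb 2 (mu p n (fun i => (w i).1, fun i => (w i).2))
      = (∏ i, dsbsPair p (w i)) * ∑ i, Real.logb 2 (dsbsPair p (w i)) := by
    intro w
    have hmu : mu p n (fun i => (w i).1, fun i => (w i).2) = ∏ i, dsbsPair p (w i) := by
      unfold mu; simp
    rw [hmu, Real.logb_prod _ _ (fun i _ => (dsbs_pos hp0 hp1 (w i)).ne')]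
  rw [Finset.sum_congr rfl fun w _ => h1 w,
    sum_pi_prod_mul n (dsbsPair p) (fun ab => Real.logb 2 (dsbsPair p ab)) (dsbs_sum p)]

lemma sum_mu_logQ {p q : ℝ} (hp0 : 0 < p) (hp1 : p < 1) (hq0 : 0 < q) (hq1 : q < 1)
    (n : ℕ) (f g : (Fin n → Bool) → (Fin n → Bool)) :
    ∑ uv : (Fin n → Bool) × (Fin n → Bool),
        mu p n uv * Real.logb 2 (∏ i, dsbsPair q (f uv.1 i, g uv.2 i))
      = n * Real.logb 2 ((1 - q) / 2)
        - Real.logb 2 ((1 - q) / q) * expDH p n f g := by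
  have h1 : ∀ uv : (Fin n → Bool) × (Fin n → Bool),
      Real.logb 2 (∏ i, dsbsPair q (f uv.1 i, g uv.2 i))
        = n * Real.logb 2 ((1 - q) / 2)
          - Real.logb 2 ((1 - q) / q) * (hammingDist (f uv.1) (g uv.2) : ℝ) := by
    intro uv
    rw [Real.logb_prod _ _ (fun i _ => (dsbs_pos hq0 hq1 _).ne')]
    rw [Finset.sum_congr rfl fun i _ => logb_dsbs hq0 hq1 (f uv.1 i, g uv.2 i)]
    rw [Finset.sum_sub_distrib, Finset.sum_const, card_univ, Fintype.card_fin,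
      nsmul_eq_mul, ← Finset.sum_mul, hamming_cast]
    ring
  rw [Finset.sum_congr rfl fun uv _ => by rw [h1 uv]]
  have h2 : ∀ uv : (Fin n → Bool) × (Fin n → Bool),
      mu p n uv * (n * Real.logb 2 ((1 - q) / 2)
          - Real.logb 2 ((1 - q) / q) * (hammingDist (f uv.1) (g uv.2) : ℝ))
      = (n * Real.logb 2 ((1 - q) / 2)) * mu p n uv
        - Real.logb 2 ((1 - q) / q)
            * (mu p n uv * (hammingDist (f uv.1) (g uv.2) : ℝ)) := by
    intro uv; ring
  rw [Finset.sum_congr rfl fun uv _ => h2 uv, Finset.sum_sub_distrib,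
    ← Finset.mul_sum, ← Finset.mul_sum, sum_mu, mul_one]
  congr 2
  rw [Fintype.sum_prod_type]
  rfl


lemma s1_val (p : ℝ) :
    ∑ ab : Bool × Bool, dsbsPair p ab * Real.logb 2 (dsbsPair p ab)
      = (1 - p) * Real.logb 2 ((1 - p) / 2) + p * Real.logb 2 (p / 2) := by
  simp [Fintype.sum_prod_type, dsbsPair]
  ring

lemma const_identity {p q : ℝ} (hp0 : 0 < p) (hp1 : p < 1) (hq0 : 0 < q) (hq1 : q < 1)
    (n : ℕ) (E : ℝ) :
    (n : ℝ) * (∑ ab : Bool × Bool, dsbsPair p ab * Real.logb 2 (dsbsPair p ab))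
        - ((n : ℝ) * Real.logb 2 ((1 - q) / 2) - Real.logb 2 ((1 - q) / q) * E)
      = Real.logb 2 ((1 - q) / q) * E
        + (n : ℝ) * (Real.logb 2 ((1 - p) / (1 - q)) - p * Real.logb 2 ((1 - p) / p)) := by
  have hp' : (0:ℝ) < 1 - p := by linarith
  have hq' : (0:ℝ) < 1 - q := by linarith
  rw [s1_val p, Real.logb_div hp'.ne' two_ne_zero, Real.logb_div hp0.ne' two_ne_zero,
    Real.logb_div hq'.ne' two_ne_zero, Real.logb_div hq'.ne' hq0.ne',
    Real.logb_div hp'.ne' hq'.ne', Real.logb_div hp'.ne' hp0.ne',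
    Real.logb_self_eq_one one_lt_two]
  ring

lemma imageLaw_expand (p : ℝ) (n : ℕ) (f g : (Fin n → Bool) → (Fin n → Bool))
    (xy : (Fin n → Bool) × (Fin n → Bool)) :
    imageLaw p n f g xy = ∑ uv : (Fin n → Bool) × (Fin n → Bool),
      mu p n uv * ((if f uv.1 = xy.1 then (1:ℝ) else 0) * (if g uv.2 = xy.2 then 1 else 0)) := by
  rw [Fintype.sum_prod_type]
  unfold imageLaw mu
  refine Finset.sum_congr rfl fun u _ => Finset.sum_congr rfl fun v _ => ?_
  ring

lemma eq_iff_inj {p : ℝ} (hp0 : 0 < p) (hp1 : p < 1) {n : ℕ}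
    (f g : (Fin n → Bool) → (Fin n → Bool)) :
    (∀ uv : (Fin n → Bool) × (Fin n → Bool),
        mu p n uv = imageLaw p n f g (f uv.1, g uv.2))
      ↔ Function.Injective f ∧ Function.Injective g := by
  constructor
  · intro h
    have nonneg : ∀ (x y : Fin n → Bool) (uv : (Fin n → Bool) × (Fin n → Bool)),
        0 ≤ mu p n uv * ((if f uv.1 = x then (1:ℝ) else 0) * (if g uv.2 = y then 1 else 0)) := by
      intro x y uv
      have := (mu_pos hp0 hp1 uv).le
      positivity
    constructor
    · intro a b hab
      by_contra hne
      have hsub : ({(a, a), (b, a)} : Finset ((Fin n → Bool) × (Fin n → Bool))) ⊆ univ :=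
        Finset.subset_univ _
      have hkey : mu p n (a, a) + mu p n (b, a) ≤ imageLaw p n f g (f a, g a) := by
        rw [imageLaw_expand]
        have hpair : (a, a) ≠ (b, a) := by simp [hne]
        have := Finset.sum_le_sum_of_subset_of_nonneg hsub
          (f := fun uv => mu p n uv *
            ((if f uv.1 = f a then (1:ℝ) else 0) * (if g uv.2 = g a then 1 else 0)))
          (fun uv _ _ => nonneg (f a) (g a) uv)
        rw [Finset.sum_pair hpair] at this
        simpa [hab] using this
      have h1 := h (a, a)
      have h2 := mu_pos hp0 hp1 (b, a)
      simp only at h1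
      linarith [hkey, h1.symm.le]
    · intro a b hab
      by_contra hne
      have hsub : ({(a, a), (a, b)} : Finset ((Fin n → Bool) × (Fin n → Bool))) ⊆ univ :=
        Finset.subset_univ _
      have hkey : mu p n (a, a) + mu p n (a, b) ≤ imageLaw p n f g (f a, g a) := by
        rw [imageLaw_expand]
        have hpair : (a, a) ≠ (a, b) := by simp [hne]
        have := Finset.sum_le_sum_of_subset_of_nonneg hsub
          (f := fun uv => mu p n uv *
            ((if f uv.1 = f a then (1:ℝ) else 0) * (if g uv.2 = g a then 1 else 0)))
          (fun uv _ _ => nonneg (f a) (g a) uv)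
        rw [Finset.sum_pair hpair] at this
        simpa [hab] using this
      have h1 := h (a, a)
      have h2 := mu_pos hp0 hp1 (a, b)
      simp only at h1
      linarith [hkey, h1.symm.le]
  · rintro ⟨hf, hg⟩ ⟨u, v⟩
    rw [imageLaw_expand, Fintype.sum_prod_type]
    simp only [hf.eq_iff, hg.eq_iff]
    simp [mul_ite, mul_one, mul_zero, Finset.sum_ite_eq]

end Stmt9Aux

open Stmt9Aux

/-- Lemma 6 of the paper: a lower bound on
`D(p_{X^nY^n} ‖ DSBS(q)^{⊗n})` in terms of the expected Hamming distance, with equality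
iff both `f` and `g` are bijections; and the specialization `q = p`. -/
theorem stmt9 (p q : ℝ) (hp0 : 0 < p) (hp1 : p < 1) (hq0 : 0 < q) (hq1 : q < 1)
    (n : ℕ) (f g : (Fin n → Bool) → (Fin n → Bool)) :
    (klDiv (imageLaw p n f g) (fun xy => ∏ i, dsbsPair q (xy.1 i, xy.2 i))
        ≥ Real.logb 2 ((1 - q) / q) * expDH p n f g
          + n * (Real.logb 2 ((1 - p) / (1 - q)) - p * Real.logb 2 ((1 - p) / p))) ∧
    (klDiv (imageLaw p n f g) (fun xy => ∏ i, dsbsPair q (xy.1 i, xy.2 i))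
        = Real.logb 2 ((1 - q) / q) * expDH p n f g
          + n * (Real.logb 2 ((1 - p) / (1 - q)) - p * Real.logb 2 ((1 - p) / p))
      ↔ Function.Bijective f ∧ Function.Bijective g) ∧
    (q = p →
      klDiv (imageLaw p n f g) (fun xy => ∏ i, dsbsPair q (xy.1 i, xy.2 i))
        ≥ Real.logb 2 ((1 - p) / p) * (expDH p n f g - n * p)) := by
  classical
  have hp' : (0:ℝ) < 1 - p := by linarith
  have hq' : (0:ℝ) < 1 - q := by linarith
  have hQpos : ∀ xy : (Fin n → Bool) × (Fin n → Bool),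
      0 < ∏ i, dsbsPair q (xy.1 i, xy.2 i) :=
    fun xy => Finset.prod_pos fun i _ => dsbs_pos hq0 hq1 _
  -- decomposition of the KL divergence
  have hkl : klDiv (imageLaw p n f g) (fun xy => ∏ i, dsbsPair q (xy.1 i, xy.2 i))
      = (∑ uv : (Fin n → Bool) × (Fin n → Bool),
            mu p n uv * Real.logb 2 (imageLaw p n f g (f uv.1, g uv.2)))
        - (n * Real.logb 2 ((1 - q) / 2)
            - Real.logb 2 ((1 - q) / q) * expDH p n f g) := by
    unfold klDiv
    have hsplit : ∀ xy : (Fin n → Bool) × (Fin n → Bool),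
        imageLaw p n f g xy *
            Real.logb 2 (imageLaw p n f g xy / (∏ i, dsbsPair q (xy.1 i, xy.2 i)))
          = imageLaw p n f g xy * Real.logb 2 (imageLaw p n f g xy)
            - imageLaw p n f g xy * Real.logb 2 (∏ i, dsbsPair q (xy.1 i, xy.2 i)) := by
      intro xy
      rcases eq_or_lt_of_le (imageLaw_nonneg hp0 hp1 f g xy) with h | h
      · rw [← h]; simp
      · rw [Real.logb_div h.ne' (hQpos xy).ne', mul_sub]
    calc ∑ xy : (Fin n → Bool) × (Fin n → Bool), imageLaw p n f g xy *
            Real.logb 2 (imageLaw p n f g xy / (∏ i, dsbsPair q (xy.1 i, xy.2 i)))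
        = (∑ xy : (Fin n → Bool) × (Fin n → Bool),
              imageLaw p n f g xy * Real.logb 2 (imageLaw p n f g xy))
          - ∑ xy : (Fin n → Bool) × (Fin n → Bool),
              imageLaw p n f g xy * Real.logb 2 (∏ i, dsbsPair q (xy.1 i, xy.2 i)) := by
          rw [Finset.sum_congr rfl fun xy _ => hsplit xy, Finset.sum_sub_distrib]
      _ = (∑ uv : (Fin n → Bool) × (Fin n → Bool),
              mu p n uv * Real.logb 2 (imageLaw p n f g (f uv.1, g uv.2)))
          - (n * Real.logb 2 ((1 - q) / 2)
              - Real.logb 2 ((1 - q) / q) * expDH p n f g) := by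
          rw [push p n f g (fun xy => Real.logb 2 (imageLaw p n f g xy)),
            push p n f g (fun xy => Real.logb 2 (∏ i, dsbsPair q (xy.1 i, xy.2 i))),
            sum_mu_logQ hp0 hp1 hq0 hq1 n f g]
  -- termwise Gibbs inequality
  have termwise : ∀ uv ∈ (univ : Finset ((Fin n → Bool) × (Fin n → Bool))),
      mu p n uv * Real.logb 2 (mu p n uv)
        ≤ mu p n uv * Real.logb 2 (imageLaw p n f g (f uv.1, g uv.2)) := by
    intro uv _
    refine mul_le_mul_of_nonneg_left ?_ (mu_pos hp0 hp1 uv).le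
    exact Real.logb_le_logb_of_le one_lt_two (mu_pos hp0 hp1 uv)
      (mu_le_imageLaw hp0 hp1 f g uv.1 uv.2)
  have hAmu : (∑ uv : (Fin n → Bool) × (Fin n → Bool),
        mu p n uv * Real.logb 2 (mu p n uv))
      - (n * Real.logb 2 ((1 - q) / 2) - Real.logb 2 ((1 - q) / q) * expDH p n f g)
      = Real.logb 2 ((1 - q) / q) * expDH p n f g
        + n * (Real.logb 2 ((1 - p) / (1 - q)) - p * Real.logb 2 ((1 - p) / p)) := by
    rw [mu_logmu hp0 hp1 n]
    exact const_identity hp0 hp1 hq0 hq1 n _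
  have hsum_le : (∑ uv : (Fin n → Bool) × (Fin n → Bool),
        mu p n uv * Real.logb 2 (mu p n uv))
      ≤ ∑ uv : (Fin n → Bool) × (Fin n → Bool),
          mu p n uv * Real.logb 2 (imageLaw p n f g (f uv.1, g uv.2)) :=
    Finset.sum_le_sum termwise
  have main1 : klDiv (imageLaw p n f g) (fun xy => ∏ i, dsbsPair q (xy.1 i, xy.2 i))
      ≥ Real.logb 2 ((1 - q) / q) * expDH p n f g
        + n * (Real.logb 2 ((1 - p) / (1 - q)) - p * Real.logb 2 ((1 - p) / p)) := by
    rw [hkl]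
    linarith [hsum_le, hAmu]
  have main2 : klDiv (imageLaw p n f g) (fun xy => ∏ i, dsbsPair q (xy.1 i, xy.2 i))
      = Real.logb 2 ((1 - q) / q) * expDH p n f g
        + n * (Real.logb 2 ((1 - p) / (1 - q)) - p * Real.logb 2 ((1 - p) / p))
      ↔ Function.Bijective f ∧ Function.Bijective g := by
    rw [hkl, ← hAmu]
    have hiff : (∑ uv : (Fin n → Bool) × (Fin n → Bool),
          mu p n uv * Real.logb 2 (imageLaw p n f g (f uv.1, g uv.2)))
        = (∑ uv : (Fin n → Bool) × (Fin n → Bool),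
            mu p n uv * Real.logb 2 (mu p n uv))
        ↔ Function.Injective f ∧ Function.Injective g := by
      rw [eq_comm, Finset.sum_eq_sum_iff_of_le termwise, ← eq_iff_inj hp0 hp1 f g]
      constructor
      · intro h uv
        have h1 := h uv (Finset.mem_univ uv)
        have h2 := mul_left_cancel₀ (mu_pos hp0 hp1 uv).ne' h1
        exact Real.logb_injOn_pos one_lt_two
          (Set.mem_Ioi.2 (mu_pos hp0 hp1 uv))
          (Set.mem_Ioi.2 (lt_of_lt_of_le (mu_pos hp0 hp1 uv)
            (mu_le_imageLaw hp0 hp1 f g uv.1 uv.2))) h2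
      · intro h uv _
        rw [h uv]
    constructor
    · intro h
      have : (∑ uv : (Fin n → Bool) × (Fin n → Bool),
          mu p n uv * Real.logb 2 (imageLaw p n f g (f uv.1, g uv.2)))
        = ∑ uv : (Fin n → Bool) × (Fin n → Bool),
            mu p n uv * Real.logb 2 (mu p n uv) := by linarith
      obtain ⟨hf, hg⟩ := hiff.mp this
      exact ⟨Finite.injective_iff_bijective.mp hf, Finite.injective_iff_bijective.mp hg⟩
    · rintro ⟨hf, hg⟩
      have := hiff.mpr ⟨hf.injective, hg.injective⟩
      linarith
  refine ⟨main1, main2, ?_⟩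
  intro hqp
  subst hqp
  have h0 : Real.logb 2 ((1 - q) / (1 - q)) = 0 := by
    rw [div_self hq'.ne', Real.logb_one]
  rw [h0] at main1
  have : Real.logb 2 ((1 - q) / q) * (expDH q n f g - n * q)
      = Real.logb 2 ((1 - q) / q) * expDH q n f g
        + n * (0 - q * Real.logb 2 ((1 - q) / q)) := by ring
  linarith [main1]
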